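/- Let a > 1 and define f(N) = a + (a-1)^2 * sum_{k=1}^{N} a^k/(a^{k+1} - 1), where a = e^{rho L/(N+1)} for fixed rho L > 0. Then liminf_{N->infinity} f(N) >= 1 and limsup_{N->infinity} f(N) <= 2 - e^{-rho L}. -/

import Mathlib

open Filter Real Finset

/-- Net attenuation when `N` relays are placed uniformly: `a = exp (c/(N+1))`. -/
noncomputable def uniformAttenuation (c : ℝ) (N : ℕ) : ℝ :=
  let a := Real.exp (c / (N + 1))
  a + (a - 1) ^ 2 * ∑ k ∈ Finset.Icc 1 N, a ^ k / (a ^ (k + 1) - 1)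

lemma ua_lower (c : ℝ) (hc : 0 < c) (N : ℕ) : 1 ≤ uniformAttenuation c N := by
  unfold uniformAttenuation
  set a := Real.exp (c / (N + 1)) with ha
  have ha1 : 1 < a := by
    rw [ha]
    have : 0 < c / (N + 1) := by positivity
    calc (1:ℝ) = Real.exp 0 := by simp
    _ < Real.exp (c / (N+1)) := Real.exp_lt_exp.mpr this
  have hsum : 0 ≤ ∑ k ∈ Finset.Icc 1 N, a ^ k / (a ^ (k + 1) - 1) := by
    apply Finset.sum_nonneg
    intro k hk
    have h1 : (0:ℝ) < a ^ k := by positivity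
    have h2 : (1:ℝ) < a ^ (k + 1) := one_lt_pow₀ ha1 (by omega)
    have := div_nonneg h1.le (by linarith : (0:ℝ) ≤ a ^ (k+1) - 1)
    exact this
  nlinarith

lemma ua_upper (c : ℝ) (hc : 0 < c) (N : ℕ) :
    uniformAttenuation c N ≤ Real.exp (c / (N + 1)) +
      (Real.exp (c / (N + 1)) - 1) * Real.exp c * (1 + Real.log N) := by
  unfold uniformAttenuation
  set a := Real.exp (c / (N + 1)) with ha
  have ha1 : 1 < a := by
    rw [ha]
    have : 0 < c / (N + 1) := by positivity
    calc (1:ℝ) = Real.exp 0 := by simp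
    _ < Real.exp (c / (N+1)) := Real.exp_lt_exp.mpr this
  have ha0 : 0 < a := by linarith
  -- termwise bound
  have key : ∀ k ∈ Finset.Icc 1 N,
      (a - 1)^2 * (a ^ k / (a ^ (k + 1) - 1)) ≤ (a - 1) * Real.exp c * (k:ℝ)⁻¹ := by
    intro k hk
    simp only [Finset.mem_Icc] at hk
    have hk1 : 1 ≤ k := hk.1
    have hkN : k ≤ N := hk.2
    have hkpos : (0:ℝ) < k := by exact_mod_cast hk1
    have hgeo : a ^ (k+1) - 1 = (∑ j ∈ Finset.range (k+1), a ^ j) * (a - 1) :=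
      (geom_sum_mul a (k+1)).symm
    have hsumge : (k:ℝ) ≤ ∑ j ∈ Finset.range (k+1), a ^ j := by
      have : ∀ j ∈ Finset.range (k+1), (1:ℝ) ≤ a ^ j := fun j _ =>
        one_le_pow₀ ha1.le
      calc (k:ℝ) ≤ ((k+1 : ℕ):ℝ) := by push_cast; linarith
      _ = ∑ j ∈ Finset.range (k+1), (1:ℝ) := by simp
      _ ≤ _ := Finset.sum_le_sum this
    have hakc : a ^ k ≤ Real.exp c := by
      rw [ha, ← Real.exp_nat_mul]
      apply Real.exp_le_exp.mpr
      have hN1 : (0:ℝ) < (N:ℝ) + 1 := by positivity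
      have hkn : (k:ℝ) ≤ (N:ℝ) := by exact_mod_cast hkN
      rw [mul_comm, div_mul_eq_mul_div, mul_comm, div_le_iff₀ hN1]
      nlinarith
    have hden : (0:ℝ) < a ^ (k+1) - 1 := by
      have : (1:ℝ) < a ^ (k+1) := one_lt_pow₀ ha1 (by omega)
      linarith
    have hsumpos : (0:ℝ) < ∑ j ∈ Finset.range (k+1), a ^ j := lt_of_lt_of_le hkpos hsumge
    have h2 : (a - 1)^2 * (a ^ k / (a ^ (k + 1) - 1)) =
        (a - 1) * (a ^ k / (∑ j ∈ Finset.range (k+1), a ^ j)) := by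
      rw [hgeo]
      have hne : a - 1 ≠ 0 := sub_ne_zero_of_ne ha1.ne'
      field_simp
    rw [h2]
    have hfrac : a ^ k / (∑ j ∈ Finset.range (k+1), a ^ j) ≤ Real.exp c / k := by
      exact div_le_div₀ (Real.exp_pos c).le hakc hkpos hsumge
    have ham : 0 ≤ a - 1 := by linarith
    calc (a - 1) * (a ^ k / (∑ j ∈ Finset.range (k+1), a ^ j))
        ≤ (a - 1) * (Real.exp c / k) := by
          exact mul_le_mul_of_nonneg_left hfrac ham
      _ = (a - 1) * Real.exp c * (k:ℝ)⁻¹ := by field_simp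
  have hsum : (a - 1)^2 * ∑ k ∈ Finset.Icc 1 N, a ^ k / (a ^ (k + 1) - 1)
      ≤ (a - 1) * Real.exp c * (1 + Real.log N) := by
    rw [Finset.mul_sum]
    calc ∑ k ∈ Finset.Icc 1 N, (a - 1)^2 * (a ^ k / (a ^ (k + 1) - 1))
        ≤ ∑ k ∈ Finset.Icc 1 N, (a - 1) * Real.exp c * (k:ℝ)⁻¹ :=
          Finset.sum_le_sum key
      _ = (a - 1) * Real.exp c * ∑ k ∈ Finset.Icc 1 N, (k:ℝ)⁻¹ := by
          rw [Finset.mul_sum]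
      _ ≤ (a - 1) * Real.exp c * (1 + Real.log N) := by
          apply mul_le_mul_of_nonneg_left _
            (by nlinarith [Real.exp_pos c] : (0:ℝ) ≤ (a - 1) * Real.exp c)
          have h1 : (∑ k ∈ Finset.Icc 1 N, (k:ℝ)⁻¹) = ((harmonic N : ℚ) : ℝ) := by
            rw [harmonic_eq_sum_Icc]
            push_cast
            rfl
          rw [h1]
          exact harmonic_le_one_add_log N
  linarith

lemma g_tendsto (c : ℝ) (hc : 0 < c) :
    Tendsto (fun N : ℕ => Real.exp (c / (N + 1)) +
      (Real.exp (c / (N + 1)) - 1) * Real.exp c * (1 + Real.log N)) atTop (nhds 1) := by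
  have hN1 : Tendsto (fun N : ℕ => ((N:ℝ) + 1)) atTop atTop :=
    tendsto_atTop_add_const_right _ _ tendsto_natCast_atTop_atTop
  have h0 : Tendsto (fun N : ℕ => c / ((N:ℝ) + 1)) atTop (nhds 0) :=
    Tendsto.div_atTop tendsto_const_nhds hN1
  have h1 : Tendsto (fun N : ℕ => Real.exp (c / (N + 1))) atTop (nhds 1) := by
    have := (Real.continuous_exp.tendsto 0).comp h0
    simpa [Function.comp_def] using this
  have hlog : Tendsto (fun x : ℝ => (1 + Real.log x) / x) atTop (nhds 0) := by
    have hA : Tendsto (fun x : ℝ => x⁻¹) atTop (nhds 0) := tendsto_inv_atTop_zero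
    have hB : Tendsto (fun x : ℝ => Real.log x / x) atTop (nhds 0) :=
      Real.isLittleO_log_id_atTop.tendsto_div_nhds_zero
    have := hA.add hB
    rw [add_zero] at this
    apply this.congr'
    filter_upwards [eventually_gt_atTop (0:ℝ)] with x hx
    field_simp
  have hlogN : Tendsto (fun N : ℕ => (1 + Real.log N) / N) atTop (nhds 0) :=
    hlog.comp tendsto_natCast_atTop_atTop
  have h2 : Tendsto (fun N : ℕ => (Real.exp (c / (N + 1)) - 1) * Real.exp c * (1 + Real.log N))
      atTop (nhds 0) := by
    have hub : Tendsto (fun N : ℕ => c * Real.exp c * Real.exp c * ((1 + Real.log N) / N))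
        atTop (nhds 0) := by
      have := hlogN.const_mul (c * Real.exp c * Real.exp c)
      simpa using this
    apply squeeze_zero' _ _ hub
    · filter_upwards [eventually_ge_atTop 1] with N hN
      have hN1 : (1:ℝ) ≤ (N:ℝ) := by exact_mod_cast hN
      have hx : 0 < c / ((N:ℝ) + 1) := by positivity
      have he : 1 ≤ Real.exp (c / (N + 1)) := Real.one_le_exp hx.le
      have hl : 0 ≤ Real.log N := Real.log_nonneg hN1
      exact mul_nonneg (mul_nonneg (by linarith) (Real.exp_pos c).le) (by linarith)
    · filter_upwards [eventually_ge_atTop 1] with N hN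
      have hN1 : (1:ℝ) ≤ (N:ℝ) := by exact_mod_cast hN
      have hNpos : (0:ℝ) < (N:ℝ) := by linarith
      set x := c / ((N:ℝ) + 1) with hxdef
      have hx : 0 < x := by positivity
      have hxc : x ≤ c := by
        rw [hxdef, div_le_iff₀ (by positivity : (0:ℝ) < (N:ℝ)+1)]
        nlinarith
      -- exp x - 1 ≤ x * exp x
      have hexp1 : Real.exp x - 1 ≤ x * Real.exp x := by
        have h := Real.add_one_le_exp (-x)
        rw [Real.exp_neg] at h
        have h2 := mul_le_mul_of_nonneg_right h (Real.exp_pos x).le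
        rw [inv_mul_cancel₀ (Real.exp_ne_zero x)] at h2
        nlinarith
      have hexc : Real.exp x ≤ Real.exp c := Real.exp_le_exp.mpr hxc
      have hl : 0 ≤ Real.log N := Real.log_nonneg hN1
      have hxN : x ≤ c / N := by
        rw [hxdef]
        apply div_le_div_of_nonneg_left hc.le hNpos
        linarith
      have hepos := Real.exp_pos c
      have h1 : Real.exp x - 1 ≤ (c / N) * Real.exp c := by
        nlinarith [Real.exp_pos x]
      calc (Real.exp x - 1) * Real.exp c * (1 + Real.log N)
          ≤ ((c / N) * Real.exp c) * Real.exp c * (1 + Real.log N) :=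
            mul_le_mul_of_nonneg_right
              (mul_le_mul_of_nonneg_right h1 hepos.le) (by linarith)
        _ = c * Real.exp c * Real.exp c * ((1 + Real.log N) / N) := by
            field_simp
  have := h1.add h2
  rw [add_zero] at this
  exact this

theorem stmt_10 (c : ℝ) (hc : 0 < c) :
    1 ≤ Filter.liminf (fun N => uniformAttenuation c N) Filter.atTop ∧
    Filter.limsup (fun N => uniformAttenuation c N) Filter.atTop ≤ 2 - Real.exp (-c) := by
  have hg := g_tendsto c hc
  have hle : ∀ᶠ N in atTop, uniformAttenuation c N ≤
      Real.exp (c / (N + 1)) + (Real.exp (c / (N + 1)) - 1) * Real.exp c * (1 + Real.log N) :=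
    Eventually.of_forall (ua_upper c hc)
  have hge : ∀ N, 1 ≤ uniformAttenuation c N := ua_lower c hc
  have hbdd : IsBoundedUnder (· ≤ ·) atTop (fun N => uniformAttenuation c N) :=
    hg.isBoundedUnder_le.mono_le hle
  constructor
  · exact Filter.le_liminf_of_le hbdd.isCoboundedUnder_ge (Eventually.of_forall hge)
  · have hco : IsCoboundedUnder (· ≤ ·) atTop (fun N => uniformAttenuation c N) :=
      isCoboundedUnder_le_of_le atTop hge
    have h1 : Filter.limsup (fun N => uniformAttenuation c N) atTop ≤ 1 := by
      calc Filter.limsup (fun N => uniformAttenuation c N) atTop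
          ≤ Filter.limsup (fun N : ℕ => Real.exp (c / (N + 1)) +
              (Real.exp (c / (N + 1)) - 1) * Real.exp c * (1 + Real.log N)) atTop :=
            Filter.limsup_le_limsup hle hco hg.isBoundedUnder_le
        _ = 1 := hg.limsup_eq
    have : Real.exp (-c) ≤ 1 := Real.exp_le_one_iff.mpr (by linarith)
    linarith
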